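/- Let G be a group that is not locally finite. Then there exists a strongly irreducible G-shift X ⊆ (Fin 2)^G which is not a G-SFT. -/

import Mathlib

open scoped Pointwise symmDiff

namespace LFPaper

variable {G A B : Type*}

/-- The right shift action: `(shift g x) h = x (h * g)`. -/
def shift [Group G] (g : G) (x : G → A) : G → A := fun h => x (h * g)

/-- Restriction of a configuration to a finite shape. -/
def restrictF (F : Finset G) (x : G → A) : F → A := fun a => x a

/-- A `G`-shift space: a closed, shift-invariant subset of the full shift. -/
def IsShiftSpace [Group G] [TopologicalSpace A] (X : Set (G → A)) : Prop :=
  IsClosed X ∧ ∀ g : G, ∀ x ∈ X, shift g x ∈ X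

/-- A `G`-shift of finite type: the set of configurations avoiding a finite
set of forbidden patterns on a finite shape. -/
def IsSFT [Group G] (X : Set (G → A)) : Prop :=
  ∃ (F : Finset G) (P : Set (F → A)),
    X = {x : G → A | ∀ g : G, restrictF F (shift g x) ∉ P}

/-- The `F`-language of `X`: all restrictions of elements of `X` to `F`. -/
def language (X : Set (G → A)) (F : Finset G) : Set (F → A) :=
  {w | ∃ x ∈ X, restrictF F x = w}

/-- Strong irreducibility of a shift. -/
def StronglyIrreducible [Group G] (X : Set (G → A)) : Prop :=
  ∃ K : Finset G, ∀ (Fu Fv : Finset G) (u : Fu → A) (v : Fv → A),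
    Disjoint (Fu : Set G) ((K : Set G) * (Fv : Set G)) →
    u ∈ language X Fu → v ∈ language X Fv →
    ∃ x ∈ X, restrictF Fu x = u ∧ restrictF Fv x = v

/-- The free `G`-extension of an `H`-shift `Y`: all configurations whose
restriction to every right coset of `H` (pulled back to `H`) lies in `Y`. -/
def freeExt [Group G] (H : Subgroup G) (Y : Set (H → A)) : Set (G → A) :=
  {x : G → A | ∀ g : G, (fun h : H => x ((h : G) * g)) ∈ Y}

/-- Local finiteness of a group: every finitely generated subgroup is finite. -/
def IsLocallyFinite (G : Type*) [Group G] : Prop :=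
  ∀ S : Finset G, Finite ↥(Subgroup.closure (S : Set G))

/-- A (left) Følner sequence for a countable group. -/
def IsFolner [Group G] (F : ℕ → Finset G) : Prop :=
  (∀ n, (F n).Nonempty) ∧ (∀ g : G, ∃ n, g ∈ F n) ∧
  ∀ g : G, Filter.Tendsto
    (fun n => (Set.ncard ((((fun h => g * h) '' (F n : Set G))) ∆ ((F n : Set G))) : ℝ) /
      ((F n).card : ℝ))
    Filter.atTop (nhds 0)

/-- Cardinality of the `F`-language. -/
noncomputable def langCard (X : Set (G → A)) (F : Finset G) : ℕ :=
  (language X F).ncard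

/-- A shift-commuting self-homeomorphism of `X` (an automorphism of the shift `X`). -/
def IsAutomorphism [Group G] [TopologicalSpace A] (X : Set (G → A)) (φ : Equiv.Perm X) : Prop :=
  Continuous φ ∧ Continuous φ.symm ∧
  ∀ (g : G) (x y : X), (y : G → A) = shift g (x : G → A) →
    (φ y : G → A) = shift g ((φ x : G → A))

section Construction

variable {G : Type*}
variable [Group G] [DecidableEq G]

private lemma ball_succ {T : Finset G} (h1 : (1:G) ∈ T) (n : ℕ) :
    (T^n : Finset G) ⊆ T^(n+1) := by
  intro a ha
  have : a * 1 ∈ T^n * T := Finset.mul_mem_mul ha h1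
  simpa [pow_succ] using this

private lemma ball_mono {T : Finset G} (h1 : (1:G) ∈ T) {m n : ℕ} (h : m ≤ n) :
    (T^m : Finset G) ⊆ T^n := by
  induction n, h using Nat.le_induction with
  | base => exact fun a ha => ha
  | succ n _ ih => exact fun a ha => ball_succ h1 n (ih ha)

private lemma mul_mem_ball {T : Finset G} {m n : ℕ} {a b : G}
    (ha : a ∈ (T^m : Finset G)) (hb : b ∈ (T^n : Finset G)) :
    a * b ∈ (T^(m+n) : Finset G) := by
  rw [pow_add]; exact Finset.mul_mem_mul ha hb

private lemma one_mem_ball {T : Finset G} (h1 : (1:G) ∈ T) (n : ℕ) :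
    (1:G) ∈ (T^n : Finset G) := by
  induction n with
  | zero => simp [Finset.mem_one]
  | succ n ih => exact ball_succ h1 n ih

private lemma inv_mem_ball {T : Finset G} (hinv : ∀ a ∈ T, a⁻¹ ∈ T) :
    ∀ (n : ℕ) (a : G), a ∈ (T^n : Finset G) → a⁻¹ ∈ (T^n : Finset G) := by
  intro n
  induction n with
  | zero => intro a ha; rw [pow_zero, Finset.mem_one] at ha ⊢; simp [ha]
  | succ n ih =>
    intro a ha
    rw [pow_succ] at ha
    obtain ⟨b, hb, c, hc, h⟩ := Finset.mem_mul.mp ha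
    have : c⁻¹ * b⁻¹ ∈ T * T^n := Finset.mul_mem_mul (hinv c hc) (ih b hb)
    rw [← h, mul_inv_rev]
    simpa [pow_succ'] using this

/-- One closure step: add all points whose punctured 9-ball lies inside. -/
private def clStep (T E : Finset G) : Finset G :=
  E ∪ (T^9 * E).filter (fun q => ∀ w ∈ (T^9 : Finset G), w ≠ 1 → w * q ∈ E)

private def clIter (T E : Finset G) : ℕ → Finset G
  | 0 => E
  | k+1 => clStep T (clIter T E k)

private lemma subset_clStep (T E : Finset G) : E ⊆ clStep T E :=
  Finset.subset_union_left

private lemma subset_clIter (T E : Finset G) : ∀ k, E ⊆ clIter T E k := by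
  intro k
  induction k with
  | zero => exact fun a ha => ha
  | succ k ih => exact fun a ha => subset_clStep T _ (ih ha)

private lemma clIter_invariant {T : Finset G} (h1 : (1:G) ∈ T) (E : Finset G) :
    ∀ k, (clIter T E k ⊆ T^9 * E) ∧
      (∀ b, b ∉ clIter T E k → b ∈ T^9 * (clIter T E k) → b ∈ T^9 * E) := by
  intro k
  induction k with
  | zero =>
    constructor
    · intro a ha
      have : (1:G) * a ∈ T^9 * E := Finset.mul_mem_mul (one_mem_ball h1 9) ha
      simpa using this
    · intro b _ hb; exact hb
  | succ k ih =>
    constructor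
    · intro a ha
      rcases Finset.mem_union.mp ha with ha | ha
      · exact ih.1 ha
      · rcases Finset.mem_filter.mp ha with ⟨hmem, _⟩
        by_cases hE : a ∈ clIter T E k
        · exact ih.1 hE
        · exact ih.2 a hE hmem
    · intro b hb hbmem
      obtain ⟨w, hw, q, hq, h⟩ := Finset.mem_mul.mp hbmem
      rcases Finset.mem_union.mp hq with hq' | hq'
      · have hb' : b ∉ clIter T E k := fun hc => hb (subset_clStep T _ hc)
        exact ih.2 b hb' (by rw [← h]; exact Finset.mul_mem_mul hw hq')
      · rcases Finset.mem_filter.mp hq' with ⟨_, hcav⟩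
        by_cases hw1 : w = 1
        · exfalso; apply hb; rw [← h, hw1, one_mul]; exact hq
        · exfalso; apply hb
          have : w * q ∈ clIter T E k := hcav w hw hw1
          rw [← h]
          exact subset_clStep T _ this

private lemma clIter_fixed_of_eq {T E : Finset G} {k : ℕ}
    (h : clStep T (clIter T E k) = clIter T E k) :
    ∀ m, k ≤ m → clIter T E m = clIter T E k := by
  intro m hm
  induction m, hm using Nat.le_induction with
  | base => rfl
  | succ m _ ih => show clStep T (clIter T E m) = _; rw [ih, h]

private lemma exists_clIter_fixed {T : Finset G} (h1 : (1:G) ∈ T) (E : Finset G) :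
    ∃ k ≤ (T^9 * E).card, clStep T (clIter T E k) = clIter T E k := by
  by_contra hcon
  push_neg at hcon
  have hgrow : ∀ k ≤ (T^9*E).card, clIter T E k ⊂ clIter T E (k+1) := by
    intro k hk
    refine ⟨subset_clStep T _, ?_⟩
    intro hsub
    exact hcon k hk (Finset.Subset.antisymm hsub (subset_clStep T _))
  have hcard : ∀ k, k ≤ (T^9*E).card + 1 → k ≤ (clIter T E k).card := by
    intro k
    induction k with
    | zero => simp
    | succ k ih =>
      intro hk
      have h1' := ih (by omega)
      have h2 := Finset.card_lt_card (hgrow k (by omega))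
      omega
  have hle : (clIter T E ((T^9*E).card + 1)).card ≤ (T^9*E).card :=
    Finset.card_le_card (clIter_invariant h1 E _).1
  have := hcard ((T^9*E).card + 1) le_rfl
  omega

/-- The cavity closure. -/
private def CLset (T E : Finset G) : Finset G := clIter T E ((T^9 * E).card + 1)

private lemma subset_CLset (T E : Finset G) : E ⊆ CLset T E := subset_clIter T E _

private lemma CLset_subset {T : Finset G} (h1 : (1:G) ∈ T) (E : Finset G) :
    CLset T E ⊆ T^9 * E := (clIter_invariant h1 E _).1

private lemma clStep_CLset {T : Finset G} (h1 : (1:G) ∈ T) (E : Finset G) :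
    clStep T (CLset T E) = CLset T E := by
  obtain ⟨k, hk, hfix⟩ := exists_clIter_fixed h1 E
  have h2 : CLset T E = clIter T E k := clIter_fixed_of_eq hfix _ (by omega)
  rw [h2]
  exact hfix

private def Closed9 (T Ω : Finset G) : Prop :=
  ∀ q : G, (∀ w ∈ (T^9 : Finset G), w ≠ 1 → w * q ∈ Ω) → q ∈ Ω

private lemma CLset_closed9 {T : Finset G} (h1 : (1:G) ∈ T)
    (hinv : ∀ a ∈ T, a⁻¹ ∈ T) {s₀ : G} (hs₀ : s₀ ∈ T) (hs₀1 : s₀ ≠ 1) (E : Finset G) :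
    Closed9 T (CLset T E) := by
  intro q hq
  have hs₀1' : s₀ ∈ (T^1 : Finset G) := by simpa [pow_one] using hs₀
  have hs₀9 : s₀ ∈ (T^9 : Finset G) := ball_mono h1 (by norm_num) hs₀1'
  have hsq : s₀ * q ∈ CLset T E := hq s₀ hs₀9 hs₀1
  have hmem : q ∈ T^9 * CLset T E := by
    have : s₀⁻¹ * (s₀ * q) ∈ T^9 * CLset T E :=
      Finset.mul_mem_mul (inv_mem_ball hinv 9 s₀ hs₀9) hsq
    simpa [mul_assoc] using this
  have : q ∈ clStep T (CLset T E) := by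
    refine Finset.mem_union.mpr (Or.inr ?_)
    exact Finset.mem_filter.mpr ⟨hmem, fun w hw hw1 => hq w hw hw1⟩
  rwa [clStep_CLset h1 E] at this

private def MatchesAt (T : Finset G) (ζ : ℕ → G) (x : G → Fin 2) (g : G) (n : ℕ) : Prop :=
  x g = 0 ∧ x (ζ n * g) = 0 ∧
    ∀ w ∈ (T^(3*n) : Finset G), w ≠ 1 → w ≠ ζ n → x (w * g) = 1

private def XSet (T : Finset G) (ζ : ℕ → G) : Set (G → Fin 2) :=
  {x | ∀ g n, 10 ≤ n → ¬ MatchesAt T ζ x g n}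

private lemma matchesAt_shift {T : Finset G} {ζ : ℕ → G} (x : G → Fin 2) (g h : G) (n : ℕ) :
    MatchesAt T ζ (shift h x) g n ↔ MatchesAt T ζ x (g * h) n := by
  unfold MatchesAt shift
  constructor
  · rintro ⟨h1, h2, h3⟩
    refine ⟨by simpa [mul_assoc] using h1, by simpa [mul_assoc] using h2, ?_⟩
    intro w hw hw1 hw2
    simpa [mul_assoc] using h3 w hw hw1 hw2
  · rintro ⟨h1, h2, h3⟩
    refine ⟨by simpa [mul_assoc] using h1, by simpa [mul_assoc] using h2, ?_⟩
    intro w hw hw1 hw2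
    simpa [mul_assoc] using h3 w hw hw1 hw2

private lemma shift_mem_XSet {T : Finset G} {ζ : ℕ → G} {x : G → Fin 2}
    (hx : x ∈ XSet T ζ) (h : G) : shift h x ∈ XSet T ζ := by
  intro g n hn hM
  exact hx (g * h) n hn ((matchesAt_shift x g h n).mp hM)

private lemma isOpen_eq_at (c : G) (v : Fin 2) : IsOpen {x : G → Fin 2 | x c = v} := by
  have : {x : G → Fin 2 | x c = v} = (fun x : G → Fin 2 => x c) ⁻¹' {v} := by
    ext x; simp
  rw [this]
  exact (continuous_apply c).isOpen_preimage _ (isOpen_discrete _)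

private lemma isOpen_matchesAt (T : Finset G) (ζ : ℕ → G) (g : G) (n : ℕ) :
    IsOpen {x : G → Fin 2 | MatchesAt T ζ x g n} := by
  classical
  have heq : {x : G → Fin 2 | MatchesAt T ζ x g n} =
      ({x : G → Fin 2 | x g = 0} ∩ {x : G → Fin 2 | x (ζ n * g) = 0}) ∩
      ⋂ w ∈ ((T^(3*n) : Finset G) : Set G),
        {x : G → Fin 2 | w ≠ 1 → w ≠ ζ n → x (w * g) = 1} := by
    ext x
    simp only [Set.mem_setOf_eq, Set.mem_inter_iff, Set.mem_iInter, MatchesAt]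
    tauto
  rw [heq]
  refine IsOpen.inter (IsOpen.inter (isOpen_eq_at _ _) (isOpen_eq_at _ _)) ?_
  refine (Set.Finite.isOpen_biInter (Finset.finite_toSet _) ?_)
  intro w _
  by_cases h1 : w = 1
  · have : {x : G → Fin 2 | w ≠ 1 → w ≠ ζ n → x (w * g) = 1} = Set.univ := by
      ext x; simp [h1]
    rw [this]; exact isOpen_univ
  by_cases h2 : w = ζ n
  · have : {x : G → Fin 2 | w ≠ 1 → w ≠ ζ n → x (w * g) = 1} = Set.univ := by
      ext x; simp [h2]
    rw [this]; exact isOpen_univ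
  · have : {x : G → Fin 2 | w ≠ 1 → w ≠ ζ n → x (w * g) = 1}
        = {x : G → Fin 2 | x (w * g) = 1} := by
      ext x; simp [h1, h2]
    rw [this]; exact isOpen_eq_at _ _

private lemma isClosed_XSet (T : Finset G) (ζ : ℕ → G) : IsClosed (XSet T ζ) := by
  have heq : XSet T ζ = ⋂ (g : G), ⋂ (n : ℕ),
      {x : G → Fin 2 | 10 ≤ n → ¬ MatchesAt T ζ x g n} := by
    ext x; simp only [XSet, Set.mem_setOf_eq, Set.mem_iInter]
  rw [heq]
  refine isClosed_iInter fun g => isClosed_iInter fun n => ?_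
  by_cases hn : 10 ≤ n
  · have h2 : {x : G → Fin 2 | 10 ≤ n → ¬ MatchesAt T ζ x g n}
        = {x : G → Fin 2 | MatchesAt T ζ x g n}ᶜ := by
      ext x; simp [hn]
    rw [h2]
    exact (isOpen_matchesAt T ζ g n).isClosed_compl
  · have h2 : {x : G → Fin 2 | 10 ≤ n → ¬ MatchesAt T ζ x g n} = Set.univ := by
      ext x; simp [hn]
    rw [h2]; exact isClosed_univ

section Chain

variable {T : Finset G} {ζ : ℕ → G}

private lemma chain_lemma
    (h1T : (1:G) ∈ T) (hinvT : ∀ a ∈ T, a⁻¹ ∈ T)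
    {s₀ : G} (hs₀ : s₀ ∈ T) (hs₀1 : s₀ ≠ 1)
    {n : ℕ} (hn : 10 ≤ n)
    (hζn : ζ n ∈ (T^n : Finset G)) (hζn' : ζ n ∉ (T^(n-1) : Finset G))
    {Ω Ω' : Finset G} {g : G}
    (hpiv : s₀ * g ∈ Ω)
    (hsep : ∀ a ∈ Ω, ∀ b ∈ Ω', a * b⁻¹ ∉ (T^20 : Finset G))
    (hones : ∀ w ∈ (T^(3*n) : Finset G), w ≠ 1 → w ≠ ζ n → (w * g ∈ Ω ∨ w * g ∈ Ω')) :
    ∀ k, k ≤ 3*n → ∀ w ∈ (T^k : Finset G), w ≠ 1 → w ≠ ζ n → w * g ∈ Ω := by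
  -- decomposition of ζ n
  have hdec : ∃ s'' ∈ T, ∃ ζ' ∈ (T^(n-1) : Finset G), s'' * ζ' = ζ n := by
    have hpow : (T^(n-1+1) : Finset G) = T * T^(n-1) := pow_succ' T (n-1)
    have hn1 : n - 1 + 1 = n := by omega
    rw [hn1] at hpow
    exact Finset.mem_mul.mp (hpow ▸ hζn)
  obtain ⟨s'', hs'', ζ', hζ'mem, hζ'eq⟩ := hdec
  have hζ'1 : ζ' ≠ 1 := by
    intro h
    apply hζn'
    rw [h, mul_one] at hζ'eq
    rw [← hζ'eq]
    exact ball_mono h1T (show 1 ≤ n-1 by omega) (by simpa [pow_one] using hs'')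
  have hζ'ζ : ζ' ≠ ζ n := by
    intro h; rw [h] at hζ'mem; exact hζn' hζ'mem
  have hside : ∀ a b : G, a ∈ Ω → (b ∈ Ω ∨ b ∈ Ω') → a * b⁻¹ ∈ (T^2 : Finset G) → b ∈ Ω := by
    intro a b ha hb hab
    rcases hb with hb | hb
    · exact hb
    · exact absurd (ball_mono h1T (by norm_num) hab) (hsep a ha b hb)
  intro k
  induction k using Nat.strong_induction_on with
  | _ k ih =>
    intro hk w hw hw1 hwζ
    cases k with
    | zero =>
      rw [pow_zero, Finset.mem_one] at hw
      exact absurd hw hw1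
    | succ k =>
      have hwmem : w ∈ (T^(3*n) : Finset G) := ball_mono h1T hk hw
      have hor : w * g ∈ Ω ∨ w * g ∈ Ω' := hones w hwmem hw1 hwζ
      rw [pow_succ'] at hw
      obtain ⟨s, hs, w', hw', heq⟩ := Finset.mem_mul.mp hw
      by_cases hc1 : w' = 1
      · -- w = s : link to the pivot s₀
        have hwT : w ∈ T := by rw [← heq, hc1, mul_one]; exact hs
        refine hside (s₀ * g) (w * g) hpiv hor ?_
        have he : (s₀ * g) * (w * g)⁻¹ = s₀ * w⁻¹ := by group
        rw [he]
        have h2 : s₀ * w⁻¹ ∈ (T^(1+1) : Finset G) :=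
          mul_mem_ball (by simpa [pow_one] using hs₀)
            (by simpa [pow_one] using hinvT w hwT)
        simpa using h2
      · by_cases hc2 : w' = ζ n
        · -- w = s * ζ n : link to ζ'
          have hkn : n ≤ k := by
            by_contra hlt
            push_neg at hlt
            apply hζn'
            have hmem : w' ∈ (T^(n-1) : Finset G) := ball_mono h1T (show k ≤ n-1 by omega) hw'
            rwa [hc2] at hmem
          have hζ'side : ζ' * g ∈ Ω :=
            ih (n-1) (by omega) (by omega) ζ' hζ'mem hζ'1 hζ'ζ
          refine hside (ζ' * g) (w * g) hζ'side hor ?_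
          have hwe : w = s * (s'' * ζ') := by rw [hζ'eq, ← hc2, heq]
          have he : (ζ' * g) * (w * g)⁻¹ = s''⁻¹ * s⁻¹ := by rw [hwe]; group
          rw [he]
          have h2 : s''⁻¹ * s⁻¹ ∈ (T^(1+1) : Finset G) :=
            mul_mem_ball (by simpa [pow_one] using hinvT s'' hs'')
              (by simpa [pow_one] using hinvT s hs)
          simpa using h2
        · -- generic step : link to w'
          have hw'side : w' * g ∈ Ω :=
            ih k (by omega) (by omega) w' hw' hc1 hc2
          refine hside (w' * g) (w * g) hw'side hor ?_
          have he : (w' * g) * (w * g)⁻¹ = s⁻¹ := by rw [← heq]; group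
          rw [he]
          exact ball_mono h1T (show 1 ≤ 2 by norm_num)
            (by simpa [pow_one] using hinvT s hs)

end Chain

section Branch

variable {T : Finset G} {ζ : ℕ → G}

private lemma branch_false
    (h1T : (1:G) ∈ T) (hinvT : ∀ a ∈ T, a⁻¹ ∈ T)
    {s₀ : G} (hs₀ : s₀ ∈ T) (hs₀1 : s₀ ≠ 1)
    {n : ℕ} (hn : 10 ≤ n)
    (hζn : ζ n ∈ (T^n : Finset G)) (hζn' : ζ n ∉ (T^(n-1) : Finset G))
    {Ω Ω' : Finset G} (hΩ9 : Closed9 T Ω)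
    (hsep : ∀ a ∈ Ω, ∀ b ∈ Ω', a * b⁻¹ ∉ (T^20 : Finset G))
    {x xw : G → Fin 2} (hxw : xw ∈ XSet T ζ)
    (hagree : ∀ q, q ∈ Ω → x q = xw q)
    (hones : ∀ q : G, x q = 1 → q ∈ Ω ∨ q ∈ Ω')
    {g : G} (hM : MatchesAt T ζ x g n)
    (hpiv : s₀ * g ∈ Ω) : False := by
  obtain ⟨hM0, hM1, hM2⟩ := hM
  have h9n : (9:ℕ) ≤ 3*n := by omega
  have h9n1 : (9:ℕ) ≤ n-1 := by omega
  have hζT9 : ζ n ∉ (T^9 : Finset G) := fun h => hζn' (ball_mono h1T h9n1 h)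
  -- all ring positions lie in Ω
  have hring : ∀ w ∈ (T^(3*n) : Finset G), w ≠ 1 → w ≠ ζ n → w * g ∈ Ω := by
    refine chain_lemma h1T hinvT hs₀ hs₀1 hn hζn hζn' hpiv hsep ?_ (3*n) le_rfl
    intro w hw hw1 hwζ
    exact hones (w * g) (hM2 w hw hw1 hwζ)
  -- the two pattern zeros lie in Ω as well, by 9-closedness
  have hgΩ : g ∈ Ω := by
    refine hΩ9 g ?_
    intro τ hτ hτ1
    refine hring τ (ball_mono h1T h9n hτ) hτ1 ?_
    intro h; rw [h] at hτ; exact hζT9 hτ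
  have hζgΩ : ζ n * g ∈ Ω := by
    refine hΩ9 (ζ n * g) ?_
    intro τ hτ hτ1
    have h1 : τ * ζ n ∈ (T^(9+n) : Finset G) := mul_mem_ball hτ hζn
    have h2 : τ * ζ n ∈ (T^(3*n) : Finset G) := ball_mono h1T (by omega) h1
    have h3 : τ * ζ n ≠ 1 := by
      intro h
      have : ζ n = τ⁻¹ := eq_inv_of_mul_eq_one_right h
      rw [this] at hζT9
      exact hζT9 (inv_mem_ball hinvT 9 τ hτ)
    have h4 : τ * ζ n ≠ ζ n := by
      intro h
      exact hτ1 (by simpa using mul_right_cancel (h.trans (one_mul (ζ n)).symm))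
    have := hring (τ * ζ n) h2 h3 h4
    rwa [mul_assoc] at this
  -- transfer the pattern to xw
  refine hxw g n hn ⟨?_, ?_, ?_⟩
  · rw [← hagree g hgΩ]; exact hM0
  · rw [← hagree (ζ n * g) hζgΩ]; exact hM1
  · intro w hw hw1 hwζ
    rw [← hagree (w * g) (hring w hw hw1 hwζ)]
    exact hM2 w hw hw1 hwζ

end Branch

section Witnesses

variable {T : Finset G} {ζ : ℕ → G}

open Classical in
private noncomputable def ySingle (T : Finset G) (c : G) : G → Fin 2 :=
  fun q => if q = c then 0 else if ∃ k, q ∈ (T^k : Finset G) then 1 else 0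

private def chiSet (Ω : Finset G) : G → Fin 2 := fun q => if q ∈ Ω then 1 else 0

private lemma ySingle_mem
    (h1T : (1:G) ∈ T) (hinvT : ∀ a ∈ T, a⁻¹ ∈ T)
    {s₀ : G} (hs₀ : s₀ ∈ T) (hs₀1 : s₀ ≠ 1)
    (hζ : ∀ n, 1 ≤ n → ζ n ∈ (T^n : Finset G) ∧ ζ n ∉ (T^(n-1) : Finset G))
    (c : G) : ySingle T c ∈ XSet T ζ := by
  classical
  intro g n hn hM
  obtain ⟨hM0, hM1, hM2⟩ := hM
  have hs₀1' : s₀ ∈ (T^1 : Finset G) := by simpa [pow_one] using hs₀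
  have hs₀ζ : s₀ ≠ ζ n := by
    intro h
    exact (hζ n (by omega)).2 (ball_mono h1T (show 1 ≤ n-1 by omega) (h ▸ hs₀1'))
  have hp := hM2 s₀ (ball_mono h1T (show 1 ≤ 3*n by omega) hs₀1') hs₀1 hs₀ζ
  -- the pivot position has value 1, hence lies in the subgroup part
  have hgH : ∃ k, g ∈ (T^k : Finset G) := by
    unfold ySingle at hp
    split_ifs at hp with h1 h2
    · exact absurd hp (by decide)
    · obtain ⟨k, hk⟩ := h2
      refine ⟨1 + k, ?_⟩
      have := mul_mem_ball (inv_mem_ball hinvT 1 s₀ hs₀1') hk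
      simpa [mul_assoc] using this
    · exact absurd hp (by decide)
  have hgc : g = c := by
    by_contra h
    unfold ySingle at hM0
    rw [if_neg h, if_pos hgH] at hM0
    exact absurd hM0 (by decide)
  have hζgH : ∃ k, ζ n * g ∈ (T^k : Finset G) := by
    obtain ⟨k, hk⟩ := hgH
    exact ⟨n + k, mul_mem_ball (hζ n (by omega)).1 hk⟩
  have hζgc : ζ n * g = c := by
    by_contra h
    unfold ySingle at hM1
    rw [if_neg h, if_pos hζgH] at hM1
    exact absurd hM1 (by decide)
  have hone : ζ n = 1 := by
    have : ζ n * g = (1:G) * g := by rw [one_mul, hζgc, hgc]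
    exact mul_right_cancel this
  exact (hζ n (by omega)).2 (hone ▸ one_mem_ball h1T (n-1))

private lemma chiSet_mem
    (h1T : (1:G) ∈ T)
    (hζ : ∀ n, 1 ≤ n → ζ n ∈ (T^n : Finset G) ∧ ζ n ∉ (T^(n-1) : Finset G))
    {Ω : Finset G} (hΩ9 : Closed9 T Ω) : chiSet Ω ∈ XSet T ζ := by
  intro g n hn hM
  obtain ⟨hM0, hM1, hM2⟩ := hM
  have hg : g ∈ Ω := by
    refine hΩ9 g ?_
    intro τ hτ hτ1
    have hτζ : τ ≠ ζ n := by
      intro h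
      exact (hζ n (by omega)).2 (ball_mono h1T (show 9 ≤ n-1 by omega) (h ▸ hτ))
    have := hM2 τ (ball_mono h1T (show 9 ≤ 3*n by omega) hτ) hτ1 hτζ
    unfold chiSet at this
    by_contra hcon
    rw [if_neg hcon] at this
    exact absurd this (by decide)
  unfold chiSet at hM0
  rw [if_pos hg] at hM0
  exact absurd hM0 (by decide)

end Witnesses


end Construction

set_option maxRecDepth 8000 in
set_option maxHeartbeats 2000000 in
/-- Over a group that is not locally finite, there exists a strongly irreducible
`G`-shift which is not a `G`-SFT. -/

theorem exists_stronglyIrreducible_not_SFT [Group G] (hLF : ¬ IsLocallyFinite G) :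
    ∃ X : Set (G → Fin 2), IsShiftSpace X ∧ StronglyIrreducible X ∧ ¬ IsSFT X := by
  classical
  unfold IsLocallyFinite at hLF
  push_neg at hLF
  obtain ⟨S, hS⟩ := hLF
  set T : Finset G := insert 1 (S ∪ S.image (·⁻¹)) with hTdef
  have h1T : (1:G) ∈ T := Finset.mem_insert_self _ _
  have hST : ∀ s ∈ S, s ∈ T := fun s hs =>
    Finset.mem_insert_of_mem (Finset.mem_union_left _ hs)
  have hinvT : ∀ a ∈ T, a⁻¹ ∈ T := by
    intro a ha
    rcases Finset.mem_insert.mp ha with h | h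
    · rw [h]; simpa using h1T
    · rcases Finset.mem_union.mp h with h | h
      · exact Finset.mem_insert_of_mem
          (Finset.mem_union_right _ (Finset.mem_image_of_mem _ h))
      · obtain ⟨b, hb, hb'⟩ := Finset.mem_image.mp h
        rw [← hb']
        simpa using hST b hb
  -- growth of the balls `T^n`
  have hgrow : ∀ n : ℕ, ∃ g, g ∈ (T^(n+1) : Finset G) ∧ g ∉ (T^n : Finset G) := by
    intro n
    by_contra hcon
    push_neg at hcon
    have hstab : ∀ m, n ≤ m → (T^m : Finset G) ⊆ T^n := by
      intro m hm
      induction m, hm using Nat.le_induction with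
      | base => exact fun a ha => ha
      | succ m hm ih =>
        intro a ha
        rw [pow_succ] at ha
        obtain ⟨b, hb, c, hc, h⟩ := Finset.mem_mul.mp ha
        have hb' : b ∈ (T^n : Finset G) := ih hb
        have hmem : a ∈ (T^(n+1) : Finset G) := by
          rw [← h, pow_succ]; exact Finset.mul_mem_mul hb' hc
        exact hcon a hmem
    have hex : ∀ a, a ∈ Subgroup.closure (S : Set G) → ∃ k, a ∈ (T^k : Finset G) := by
      intro a ha
      induction ha using Subgroup.closure_induction with
      | mem x hx => exact ⟨1, by simpa [pow_one] using hST x hx⟩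
      | one => exact ⟨0, by simp [Finset.mem_one]⟩
      | mul x y hx hy ihx ihy =>
        obtain ⟨k1, h1⟩ := ihx
        obtain ⟨k2, h2⟩ := ihy
        exact ⟨k1+k2, mul_mem_ball h1 h2⟩
      | inv x hx ihx =>
        obtain ⟨k, h⟩ := ihx
        exact ⟨k, inv_mem_ball hinvT k x h⟩
    have hsub : (Subgroup.closure (S : Set G) : Set G) ⊆ ↑(T^n : Finset G) := by
      intro a ha
      obtain ⟨k, hk⟩ := hex a ha
      exact hstab (n + k) (by omega) (ball_mono h1T (by omega) hk)
    apply not_finite_iff_infinite.mpr hS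
    exact (Set.Finite.subset (Finset.finite_toSet _) hsub).to_subtype
  -- elements of exact word length `n`
  obtain ⟨s₀, hs₀', hs₀n⟩ := hgrow 0
  choose zf hz1 hz2 using hgrow
  set ζ : ℕ → G := fun n => zf (n-1) with hζdef
  have hζ : ∀ n, 1 ≤ n → ζ n ∈ (T^n : Finset G) ∧ ζ n ∉ (T^(n-1) : Finset G) := by
    intro n hn
    have h : n - 1 + 1 = n := by omega
    constructor
    · have := hz1 (n-1); rwa [h] at this
    · exact hz2 (n-1)
  have hs₀ : s₀ ∈ T := by simpa using hs₀'
  have hs₀1 : s₀ ≠ 1 := by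
    intro h
    apply hs₀n
    rw [h, pow_zero, Finset.mem_one]
  refine ⟨XSet T ζ, ⟨isClosed_XSet T ζ, fun g x hx => shift_mem_XSet hx g⟩, ?_, ?_⟩
  · -- strong irreducibility
    refine ⟨T^100, ?_⟩
    intro Fu Fv u v hdisj hu hv
    obtain ⟨xu, hxu, hru⟩ := hu
    obtain ⟨xv, hxv, hrv⟩ := hv
    set Ωu : Finset G := CLset T Fu with hΩudef
    set Ωv : Finset G := CLset T Fv with hΩvdef
    have hΩu9 : Closed9 T Ωu := CLset_closed9 h1T hinvT hs₀ hs₀1 Fu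
    have hΩv9 : Closed9 T Ωv := CLset_closed9 h1T hinvT hs₀ hs₀1 Fv
    have hsep0 : ∀ a ∈ Fu, ∀ b ∈ Fv, a * b⁻¹ ∉ (T^100 : Finset G) := by
      intro a ha b hb hab
      have hmem : a ∈ ((T^100 : Finset G) : Set G) * (Fv : Set G) :=
        ⟨a * b⁻¹, Finset.mem_coe.mpr hab, b, hb, by group⟩
      exact Set.disjoint_left.mp hdisj ha hmem
    have hsepΩ : ∀ a ∈ Ωu, ∀ b ∈ Ωv, a * b⁻¹ ∉ (T^20 : Finset G) := by
      intro a ha b hb hab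
      obtain ⟨α, hα, f, hf, haf⟩ := Finset.mem_mul.mp (CLset_subset h1T Fu ha)
      obtain ⟨β, hβ, f', hf', hbf⟩ := Finset.mem_mul.mp (CLset_subset h1T Fv hb)
      apply hsep0 f hf f' hf'
      have he : f * f'⁻¹ = α⁻¹ * (a * b⁻¹) * β := by rw [← haf, ← hbf]; group
      rw [he]
      have h38 : α⁻¹ * (a * b⁻¹) * β ∈ (T^(9+20+9) : Finset G) :=
        mul_mem_ball (mul_mem_ball (inv_mem_ball hinvT 9 α hα) hab) hβ
      exact ball_mono h1T (by norm_num) h38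
    have hsepΩ' : ∀ a ∈ Ωv, ∀ b ∈ Ωu, a * b⁻¹ ∉ (T^20 : Finset G) := by
      intro a ha b hb hab
      apply hsepΩ b hb a ha
      have he : b * a⁻¹ = (a * b⁻¹)⁻¹ := by group
      rw [he]
      exact inv_mem_ball hinvT 20 _ hab
    have hΩdisj : ∀ a, a ∈ Ωu → a ∈ Ωv → False := by
      intro a hu' hv'
      exact hsepΩ a hu' a hv' (by simpa using one_mem_ball h1T 20)
    set x : G → Fin 2 := fun q => if q ∈ Ωu then xu q else if q ∈ Ωv then xv q else 0
      with hxdef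
    have hxΩu : ∀ q, q ∈ Ωu → x q = xu q := by
      intro q hq; simp only [hxdef]; rw [if_pos hq]
    have hxΩv : ∀ q, q ∈ Ωv → x q = xv q := by
      intro q hq
      have hq' : q ∉ Ωu := fun h => hΩdisj q h hq
      simp only [hxdef]; rw [if_neg hq', if_pos hq]
    have hones : ∀ q, x q = 1 → q ∈ Ωu ∨ q ∈ Ωv := by
      intro q hq
      by_contra hcon
      push_neg at hcon
      simp only [hxdef] at hq
      rw [if_neg hcon.1, if_neg hcon.2] at hq
      exact absurd hq (by decide)
    refine ⟨x, ?_, ?_, ?_⟩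
    · -- x is a legal configuration
      intro g n hn hM
      have hs₀1' : s₀ ∈ (T^1 : Finset G) := by simpa [pow_one] using hs₀
      have hs₀ζ : s₀ ≠ ζ n := by
        intro h
        exact (hζ n (by omega)).2
          (ball_mono h1T (show 1 ≤ n-1 by omega) (h ▸ hs₀1'))
      have hpval :=
        hM.2.2 s₀ (ball_mono h1T (show 1 ≤ 3*n by omega) hs₀1') hs₀1 hs₀ζ
      rcases hones _ hpval with hside | hside
      · exact branch_false h1T hinvT hs₀ hs₀1 hn (hζ n (by omega)).1
          (hζ n (by omega)).2 hΩu9 hsepΩ hxu hxΩu hones hM hside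
      · exact branch_false h1T hinvT hs₀ hs₀1 hn (hζ n (by omega)).1
          (hζ n (by omega)).2 hΩv9 hsepΩ' hxv hxΩv
          (fun q hq => (hones q hq).symm) hM hside
    · funext a
      have haΩ : (a:G) ∈ Ωu := subset_CLset T Fu a.2
      calc restrictF Fu x a = x ↑a := rfl
        _ = xu ↑a := hxΩu _ haΩ
        _ = u a := congrFun hru a
    · funext a
      have haΩ : (a:G) ∈ Ωv := subset_CLset T Fv a.2
      calc restrictF Fv x a = x ↑a := rfl
        _ = xv ↑a := hxΩv _ haΩ
        _ = v a := congrFun hrv a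
  · -- not an SFT
    rintro ⟨F, P, hXP⟩
    set M₀ : ℕ := (F ×ˢ F).sup
      (fun p => if h : ∃ k, p.1 * p.2⁻¹ ∈ (T^k : Finset G) then Nat.find h else 0)
      with hM₀def
    have hM₀ : ∀ f₁ ∈ F, ∀ f₂ ∈ F,
        (∃ k, f₁ * f₂⁻¹ ∈ (T^k : Finset G)) → f₁ * f₂⁻¹ ∈ (T^M₀ : Finset G) := by
      intro f₁ h₁ f₂ h₂ hexx
      have hle : (if h : ∃ k, f₁ * f₂⁻¹ ∈ (T^k : Finset G) then Nat.find h else 0) ≤ M₀ := by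
        rw [hM₀def]
        exact Finset.le_sup (f := fun p : G × G =>
            if h : ∃ k, p.1 * p.2⁻¹ ∈ (T^k : Finset G) then Nat.find h else 0)
          (b := (f₁, f₂)) (Finset.mem_product.mpr ⟨h₁, h₂⟩)
      rw [dif_pos hexx] at hle
      exact ball_mono h1T hle (Nat.find_spec hexx)
    set N : ℕ := M₀ + 10 with hNdef
    have hN10 : (10:ℕ) ≤ N := by omega
    have hζN := hζ N (by omega)
    set CL : Finset G := CLset T (T^(3*N)) with hCLdef
    have hCL9 : Closed9 T CL := CLset_closed9 h1T hinvT hs₀ hs₀1 _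
    have hCLsub : (T^(3*N) : Finset G) ⊆ CL := subset_CLset T _
    have hCLH : ∀ a ∈ CL, ∃ k, a ∈ (T^k : Finset G) := by
      intro a ha
      exact ⟨9 + 3*N, by rw [pow_add]; exact CLset_subset h1T _ ha⟩
    set xstar : G → Fin 2 := fun q => if q ∈ CL ∧ q ≠ 1 ∧ q ≠ ζ N then 1 else 0
      with hxs
    have hxstar_not : xstar ∉ XSet T ζ := by
      intro hmem
      refine hmem 1 N hN10 ⟨?_, ?_, ?_⟩
      · simp only [hxs]
        rw [if_neg (by simp)]
      · simp only [hxs, mul_one]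
        rw [if_neg (by simp)]
      · intro w hw hw1 hwζ
        simp only [hxs, mul_one]
        rw [if_pos ⟨hCLsub hw, hw1, hwζ⟩]
    obtain ⟨g₀, hg₀⟩ : ∃ g₀, restrictF F (shift g₀ xstar) ∈ P := by
      by_contra hcon
      push_neg at hcon
      exact hxstar_not (by rw [hXP]; exact hcon)
    have key : ∃ y ∈ XSet T ζ, ∀ f : G, f ∈ F → y (f * g₀) = xstar (f * g₀) := by
      by_cases hc1 : ∃ f ∈ F, f * g₀ = 1
      · -- the window contains the zero at 1
        refine ⟨ySingle T 1, ySingle_mem h1T hinvT hs₀ hs₀1 hζ 1, ?_⟩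
        intro f hf
        obtain ⟨f₁, hf₁, hfg₁⟩ := hc1
        by_cases ha1 : f * g₀ = 1
        · rw [ha1]
          unfold ySingle
          rw [if_pos rfl]
          simp only [hxs]
          rw [if_neg (by simp)]
        · by_cases haH : ∃ k, f * g₀ ∈ (T^k : Finset G)
          · have hg₀inv : g₀ = f₁⁻¹ := eq_inv_of_mul_eq_one_right hfg₁
            have haD : f * g₀ = f * f₁⁻¹ := by rw [hg₀inv]
            have haM : f * g₀ ∈ (T^M₀ : Finset G) := by
              rw [haD]
              exact hM₀ f hf f₁ hf₁ (by rw [← haD]; exact haH)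
            have haCL : f * g₀ ∈ CL :=
              hCLsub (ball_mono h1T (show M₀ ≤ 3*N by omega) haM)
            have haζ : f * g₀ ≠ ζ N := by
              intro h
              exact hζN.2 (ball_mono h1T (show M₀ ≤ N-1 by omega) (h ▸ haM))
            unfold ySingle
            rw [if_neg ha1, if_pos haH]
            simp only [hxs]
            rw [if_pos ⟨haCL, ha1, haζ⟩]
          · have haCL : f * g₀ ∉ CL := fun h => haH (hCLH _ h)
            unfold ySingle
            rw [if_neg ha1, if_neg haH]
            simp only [hxs]
            rw [if_neg (fun h => haCL h.1)]
      · by_cases hc2 : ∃ f ∈ F, f * g₀ = ζ N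
        · -- the window contains the zero at ζ N
          refine ⟨ySingle T (ζ N), ySingle_mem h1T hinvT hs₀ hs₀1 hζ (ζ N), ?_⟩
          intro f hf
          obtain ⟨f₂, hf₂, hfg₂⟩ := hc2
          by_cases haζ : f * g₀ = ζ N
          · rw [haζ]
            unfold ySingle
            rw [if_pos rfl]
            simp only [hxs]
            rw [if_neg (by simp)]
          · by_cases haH : ∃ k, f * g₀ ∈ (T^k : Finset G)
            · have hdd : (f * g₀) * (ζ N)⁻¹ = f * f₂⁻¹ := by
                rw [← hfg₂]; group
              have hDH : ∃ k, f * f₂⁻¹ ∈ (T^k : Finset G) := by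
                obtain ⟨k, hk⟩ := haH
                refine ⟨k + N, ?_⟩
                rw [← hdd]
                exact mul_mem_ball hk (inv_mem_ball hinvT N _ hζN.1)
              have haM : f * g₀ ∈ (T^(M₀+N) : Finset G) := by
                have h1 : (f * g₀) * (ζ N)⁻¹ ∈ (T^M₀ : Finset G) := by
                  rw [hdd]; exact hM₀ f hf f₂ hf₂ hDH
                have h2 := mul_mem_ball h1 hζN.1
                simpa [mul_assoc] using h2
              have haCL : f * g₀ ∈ CL :=
                hCLsub (ball_mono h1T (show M₀+N ≤ 3*N by omega) haM)
              have ha1 : f * g₀ ≠ 1 := fun h => hc1 ⟨f, hf, h⟩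
              unfold ySingle
              rw [if_neg haζ, if_pos haH]
              simp only [hxs]
              rw [if_pos ⟨haCL, ha1, haζ⟩]
            · have haCL : f * g₀ ∉ CL := fun h => haH (hCLH _ h)
              unfold ySingle
              rw [if_neg haζ, if_neg haH]
              simp only [hxs]
              rw [if_neg (fun h => haCL h.1)]
        · -- the window misses both zeros of `xstar` inside the subgroup
          refine ⟨chiSet CL, chiSet_mem h1T hζ hCL9, ?_⟩
          intro f hf
          by_cases haCL : f * g₀ ∈ CL
          · have ha1 : f * g₀ ≠ 1 := fun h => hc1 ⟨f, hf, h⟩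
            have haζ : f * g₀ ≠ ζ N := fun h => hc2 ⟨f, hf, h⟩
            unfold chiSet
            rw [if_pos haCL]
            simp only [hxs]
            rw [if_pos ⟨haCL, ha1, haζ⟩]
          · unfold chiSet
            rw [if_neg haCL]
            simp only [hxs]
            rw [if_neg (fun h => haCL h.1)]
    obtain ⟨y, hy, hagree⟩ := key
    have hyP : restrictF F (shift g₀ y) ∉ P := by
      rw [hXP] at hy
      exact hy g₀
    apply hyP
    have heq : restrictF F (shift g₀ y) = restrictF F (shift g₀ xstar) := by
      funext a
      exact hagree a a.2
    rw [heq]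
    exact hg₀

end LFPaper
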